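/- Let N ≥ 1 and α ∈ ℝ. For every x = (x_1,…,x_N) ∈ ℝ^N, the Vandermonde determinant Δ_N satisfies ∑_{i=1}^N [ x_i (∂²Δ_N/∂x_i²)(x) + (−x_i + 1 + α) (∂Δ_N/∂x_i)(x) ] = −(N(N−1)/2) Δ_N(x); that is, Δ_N is an eigenfunction of the operator ∑_{i=1}^N L_{α,x_i} with eigenvalue −N(N−1)/2. -/

import Mathlib

open MeasureTheory Real

noncomputable section

/-- The Vandermonde determinant `Δ_N`. -/
def vdm {N : ℕ} (y : Fin N → ℝ) : ℝ :=
  ∏ p ∈ Finset.univ.filter fun p : Fin N × Fin N => p.1 < p.2, (y p.2 - y p.1)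

namespace Stmt7

variable {N : ℕ}

/-- The set of ordered pairs `(i,j)` with `i < j`. -/
def Pairs (N : ℕ) : Finset (Fin N × Fin N) :=
  Finset.univ.filter fun p : Fin N × Fin N => p.1 < p.2

def dd (x : Fin N → ℝ) (p : Fin N × Fin N) : ℝ := x p.2 - x p.1

def mm (i : Fin N) (p : Fin N × Fin N) : ℝ :=
  (if p.2 = i then 1 else 0) - (if p.1 = i then 1 else 0)

def ff (x : Fin N → ℝ) (i : Fin N) (p : Fin N × Fin N) (t : ℝ) : ℝ :=
  (if p.2 = i then t else x p.2) - (if p.1 = i then t else x p.1)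

lemma vdm_eq (x : Fin N → ℝ) : vdm x = ∏ p ∈ Pairs N, dd x p := rfl

lemma vdm_update (x : Fin N → ℝ) (i : Fin N) (t : ℝ) :
    vdm (Function.update x i t) = ∏ p ∈ Pairs N, ff x i p t := by
  refine Finset.prod_congr rfl fun p _ => ?_
  simp [ff, Function.update_apply]

lemma hasDerivAt_ff (x : Fin N → ℝ) (i : Fin N) (p : Fin N × Fin N) (t : ℝ) :
    HasDerivAt (ff x i p) (mm i p) t := by
  rcases eq_or_ne p.2 i with h2 | h2 <;> rcases eq_or_ne p.1 i with h1 | h1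
  · have hf : ff x i p = fun s => s - s := by funext s; simp [ff, h1, h2]
    have hm : mm i p = 0 := by simp [mm, h1, h2]
    rw [hf, hm]; exact ((hasDerivAt_id t).sub (hasDerivAt_id t)).congr_deriv (by norm_num)
  · have hf : ff x i p = fun s => s - x p.1 := by funext s; simp [ff, h1, h2]
    have hm : mm i p = 1 := by simp [mm, h1, h2]
    rw [hf, hm]; simpa using (hasDerivAt_id t).sub_const (x p.1)
  · have hf : ff x i p = fun s => x p.2 - s := by funext s; simp [ff, h1, h2]
    have hm : mm i p = -1 := by simp [mm, h1, h2]
    rw [hf, hm]; exact ((hasDerivAt_const t (x p.2)).sub (hasDerivAt_id t)).congr_deriv (by norm_num)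
  · have hf : ff x i p = fun _ => x p.2 - x p.1 := by funext s; simp [ff, h1, h2]
    have hm : mm i p = 0 := by simp [mm, h1, h2]
    rw [hf, hm]; exact hasDerivAt_const t _

lemma ff_eval (x : Fin N → ℝ) (i : Fin N) (q : Fin N × Fin N) :
    ff x i q (x i) = dd x q := by
  unfold ff dd
  rcases eq_or_ne q.2 i with h2 | h2 <;> rcases eq_or_ne q.1 i with h1 | h1 <;>
    simp [h1, h2]


def D1 (x : Fin N → ℝ) (i : Fin N) : ℝ :=
  ∑ p ∈ Pairs N, (∏ q ∈ (Pairs N).erase p, dd x q) * mm i p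

def D2 (x : Fin N → ℝ) (i : Fin N) : ℝ :=
  ∑ p ∈ Pairs N,
    (∑ q ∈ (Pairs N).erase p, (∏ r ∈ ((Pairs N).erase p).erase q, dd x r) * mm i q) * mm i p

lemma deriv_vdm_update (x : Fin N → ℝ) (i : Fin N) :
    (deriv fun t => vdm (Function.update x i t)) =
      fun t => ∑ p ∈ Pairs N, (∏ q ∈ (Pairs N).erase p, ff x i q t) * mm i p := by
  funext t
  have h1 : (fun t => vdm (Function.update x i t)) = (fun t => ∏ p ∈ Pairs N, ff x i p t) := by
    funext t; exact vdm_update x i t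
  rw [h1]
  have := HasDerivAt.fun_finsetProd (u := Pairs N) (f := ff x i) (f' := mm i)
    (fun p _ => hasDerivAt_ff x i p t)
  simpa [smul_eq_mul] using this.deriv

lemma deriv_deriv_vdm_update (x : Fin N → ℝ) (i : Fin N) :
    deriv (deriv fun t => vdm (Function.update x i t)) (x i) = D2 x i := by
  rw [deriv_vdm_update]
  have H : HasDerivAt
      (fun t => ∑ p ∈ Pairs N, (∏ q ∈ (Pairs N).erase p, ff x i q t) * mm i p)
      (∑ p ∈ Pairs N,
        (∑ q ∈ (Pairs N).erase p, (∏ r ∈ ((Pairs N).erase p).erase q, ff x i r (x i)) * mm i q)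
          * mm i p) (x i) := by
    refine HasDerivAt.fun_sum fun p _ => ?_
    have := HasDerivAt.fun_finsetProd (u := (Pairs N).erase p) (f := ff x i) (f' := mm i)
      (fun q _ => hasDerivAt_ff x i q (x i))
    simpa [smul_eq_mul] using this.mul_const (mm i p)
  rw [H.deriv, D2]
  refine Finset.sum_congr rfl fun p _ => ?_
  congr 1
  exact Finset.sum_congr rfl fun q _ => by rw [Finset.prod_congr rfl fun r _ => ff_eval x i r]

lemma deriv_vdm_update_eval (x : Fin N → ℝ) (i : Fin N) :
    deriv (fun t => vdm (Function.update x i t)) (x i) = D1 x i := by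
  rw [deriv_vdm_update, D1]
  exact Finset.sum_congr rfl fun p _ => by
    rw [Finset.prod_congr rfl fun q _ => ff_eval x i q]


lemma p_ne {p : Fin N × Fin N} (hp : p ∈ Pairs N) : p.1 ≠ p.2 :=
  ne_of_lt (Finset.mem_filter.mp hp).2

lemma sum_mm {p : Fin N × Fin N} (hp : p ∈ Pairs N) : ∑ i, mm i p = 0 := by
  have h := p_ne hp
  simp [mm, Finset.sum_sub_distrib, Finset.sum_ite_eq]

lemma sum_x_mm (x : Fin N → ℝ) (p : Fin N × Fin N) : ∑ i, x i * mm i p = dd x p := by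
  simp [mm, dd, mul_sub, mul_ite, mul_one, mul_zero, Finset.sum_sub_distrib,
    Finset.sum_ite_eq]

lemma sumA (x : Fin N → ℝ) : ∑ i, D1 x i = 0 := by
  simp only [D1]
  rw [Finset.sum_comm]
  refine Finset.sum_eq_zero fun p hp => ?_
  rw [← Finset.mul_sum, sum_mm hp, mul_zero]

lemma sumB (x : Fin N → ℝ) : ∑ i, x i * D1 x i = ((Pairs N).card : ℝ) * vdm x := by
  simp only [D1, Finset.mul_sum]
  rw [Finset.sum_comm]
  have h : ∀ p ∈ Pairs N,
      (∑ i, x i * ((∏ q ∈ (Pairs N).erase p, dd x q) * mm i p)) = vdm x := by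
    intro p hp
    simp only [mul_left_comm (x _)]
    rw [← Finset.mul_sum, sum_x_mm, vdm_eq]
    exact Finset.prod_erase_mul _ _ hp
  rw [Finset.sum_congr rfl h, Finset.sum_const, nsmul_eq_mul]

/-- Canonical ordered pair. -/
def P (a b : Fin N) : Fin N × Fin N := if a < b then (a, b) else (b, a)

def sg (a b : Fin N) : ℝ := if a < b then -1 else 1

lemma P_symm {a b : Fin N} (h : a ≠ b) : P a b = P b a := by
  unfold P
  split_ifs with h1 h2 h2
  · exfalso; fin_omega
  · rfl
  · rfl
  · exfalso; fin_omega

lemma P_mem {a b : Fin N} (h : a ≠ b) : P a b ∈ Pairs N := by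
  unfold P Pairs
  split_ifs with h1
  · simp [h1]
  · have : b < a := by fin_omega
    simp [this]

lemma P_canon {p : Fin N × Fin N} (hp : p ∈ Pairs N) : P p.1 p.2 = p := by
  have h1 : p.1 < p.2 := (Finset.mem_filter.mp hp).2
  simp [P, h1]

lemma mm_eq_zero {a : Fin N} {p : Fin N × Fin N} (h1 : a ≠ p.1) (h2 : a ≠ p.2) :
    mm a p = 0 := by
  simp [mm, h1.symm, h2.symm]

lemma mm_P_self {a b : Fin N} (h : a ≠ b) : mm a (P a b) = sg a b := by
  rcases lt_or_gt_of_ne h with h1 | h1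
  · simp [P, mm, sg, h1, Ne.symm h]
  · have h2 : ¬ a < b := not_lt_of_gt h1
    simp [P, mm, sg, h2, Ne.symm h]

lemma dd_P (x : Fin N → ℝ) (a b : Fin N) :
    dd x (P a b) = if a < b then x b - x a else x a - x b := by
  unfold dd P
  split_ifs <;> rfl

lemma key (x : Fin N → ℝ) {i j k : Fin N} (hij : i ≠ j) (hik : i ≠ k) (hjk : j ≠ k) :
    x i * (sg i j * sg i k) * dd x (P j k) + x j * (sg j k * sg j i) * dd x (P i k) +
      x k * (sg k i * sg k j) * dd x (P i j) = 0 := by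
  have hij' : (i : ℕ) ≠ j := fun h => hij (Fin.ext h)
  have hik' : (i : ℕ) ≠ k := fun h => hik (Fin.ext h)
  have hjk' : (j : ℕ) ≠ k := fun h => hjk (Fin.ext h)
  simp only [sg, dd_P, Fin.lt_def]
  split_ifs <;> first | (exfalso; omega) | ring1

lemma P_fst_snd {a b : Fin N} :
    ((P a b).1 = a ∧ (P a b).2 = b) ∨ ((P a b).1 = b ∧ (P a b).2 = a) := by
  unfold P
  split_ifs
  · exact Or.inl ⟨rfl, rfl⟩
  · exact Or.inr ⟨rfl, rfl⟩

lemma P_eq_iff {a b c d : Fin N} (h : P a b = P c d) :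
    (a = c ∧ b = d) ∨ (a = d ∧ b = c) := by
  rcases P_fst_snd (a := a) (b := b) with ⟨h1, h2⟩ | ⟨h1, h2⟩ <;>
    rcases P_fst_snd (a := c) (b := d) with ⟨h3, h4⟩ | ⟨h3, h4⟩ <;>
      rw [h] at h1 h2
  · exact Or.inl ⟨(h1.symm.trans h3).symm.symm, (h2.symm.trans h4)⟩
  · exact Or.inr ⟨h1.symm.trans h3, h2.symm.trans h4⟩
  · exact Or.inr ⟨h2.symm.trans h4, h1.symm.trans h3⟩
  · exact Or.inl ⟨h2.symm.trans h4, h1.symm.trans h3⟩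

lemma P_ne_P {i j k : Fin N} (hik : i ≠ k) (hjk : j ≠ k) : P i j ≠ P i k := by
  intro h
  rcases P_eq_iff h with ⟨h1, h2⟩ | ⟨h1, h2⟩
  · exact hjk h2
  · exact hik h1

lemma mm_P_other {a i j : Fin N} (h1 : a ≠ i) (h2 : a ≠ j) : mm a (P i j) = 0 := by
  rcases P_fst_snd (a := i) (b := j) with ⟨g1, g2⟩ | ⟨g1, g2⟩
  · exact mm_eq_zero (by rw [g1]; exact h1) (by rw [g2]; exact h2)
  · exact mm_eq_zero (by rw [g1]; exact h2) (by rw [g2]; exact h1)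

lemma sum_xmm_P (x : Fin N → ℝ) {i j k : Fin N} (hij : i ≠ j) (hik : i ≠ k) (hjk : j ≠ k) :
    ∑ a, x a * mm a (P i j) * mm a (P i k) = x i * (sg i j * sg i k) := by
  rw [Finset.sum_eq_single_of_mem i (Finset.mem_univ i)]
  · rw [mm_P_self hij, mm_P_self hik]; ring
  · intro a _ hai
    by_cases haj : a = j
    · subst haj; rw [mm_P_other hai hjk]; ring
    · rw [mm_P_other hai haj]; ring

def Triples (N : ℕ) : Finset (Fin N × Fin N × Fin N) :=
  Finset.univ.filter fun t => t.1 ≠ t.2.1 ∧ t.1 ≠ t.2.2 ∧ t.2.1 ≠ t.2.2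

def G (x : Fin N → ℝ) (t : Fin N × Fin N × Fin N) : ℝ :=
  x t.1 * (sg t.1 t.2.1 * sg t.1 t.2.2) *
    ∏ r ∈ ((Pairs N).erase (P t.1 t.2.1)).erase (P t.1 t.2.2), dd x r

lemma G_cyc (x : Fin N → ℝ) {i j k : Fin N} (hij : i ≠ j) (hik : i ≠ k) (hjk : j ≠ k) :
    G x (i, j, k) + G x (j, k, i) + G x (k, i, j) = 0 := by
  have hji := hij.symm
  have hki := hik.symm
  have hkj := hjk.symm
  have m1 : P i j ∈ Pairs N := P_mem hij
  have m2 : P i k ∈ Pairs N := P_mem hik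
  have m3 : P j k ∈ Pairs N := P_mem hjk
  have n12 : P i j ≠ P i k := P_ne_P hik hjk
  have n13 : P i j ≠ P j k := by
    intro h; rcases P_eq_iff h with ⟨h1, _⟩ | ⟨h1, _⟩; exacts [hij h1, hik h1]
  have n23 : P i k ≠ P j k := by
    intro h; rcases P_eq_iff h with ⟨h1, _⟩ | ⟨h1, _⟩; exacts [hij h1, hik h1]
  have e1 : ∏ r ∈ ((Pairs N).erase (P i j)).erase (P i k), dd x r
      = dd x (P j k) * ∏ r ∈ (((Pairs N).erase (P i j)).erase (P i k)).erase (P j k), dd x r :=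
    (Finset.mul_prod_erase _ _
      (Finset.mem_erase.mpr ⟨n23.symm, Finset.mem_erase.mpr ⟨n13.symm, m3⟩⟩)).symm
  have e2 : ∏ r ∈ ((Pairs N).erase (P j k)).erase (P i j), dd x r
      = dd x (P i k) * ∏ r ∈ (((Pairs N).erase (P j k)).erase (P i j)).erase (P i k), dd x r :=
    (Finset.mul_prod_erase _ _
      (Finset.mem_erase.mpr ⟨n12.symm, Finset.mem_erase.mpr ⟨n23, m2⟩⟩)).symm
  have e3 : ∏ r ∈ ((Pairs N).erase (P i k)).erase (P j k), dd x r
      = dd x (P i j) * ∏ r ∈ (((Pairs N).erase (P i k)).erase (P j k)).erase (P i j), dd x r :=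
    (Finset.mul_prod_erase _ _
      (Finset.mem_erase.mpr ⟨n13, Finset.mem_erase.mpr ⟨n12, m1⟩⟩)).symm
  have s2 : (((Pairs N).erase (P j k)).erase (P i j)).erase (P i k)
      = (((Pairs N).erase (P i j)).erase (P i k)).erase (P j k) := by
    ext r; simp only [Finset.mem_erase]; tauto
  have s3 : (((Pairs N).erase (P i k)).erase (P j k)).erase (P i j)
      = (((Pairs N).erase (P i j)).erase (P i k)).erase (P j k) := by
    ext r; simp only [Finset.mem_erase]; tauto
  simp only [G]
  rw [P_symm hji, P_symm hki, P_symm hkj, e1, e2, e3, s2, s3]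
  linear_combination
    (∏ r ∈ (((Pairs N).erase (P i j)).erase (P i k)).erase (P j k), dd x r) * key x hij hik hjk

lemma sum_G (x : Fin N → ℝ) : ∑ t ∈ Triples N, G x t = 0 := by
  have mem_rot : ∀ t ∈ Triples N, ((t.2.1, t.2.2, t.1) : Fin N × Fin N × Fin N) ∈ Triples N := by
    intro t ht
    simp only [Triples, Finset.mem_filter, Finset.mem_univ, true_and] at ht ⊢
    exact ⟨ht.2.2, ht.1.symm, ht.2.1.symm⟩
  have rot1 : ∑ t ∈ Triples N, G x (t.2.1, t.2.2, t.1) = ∑ t ∈ Triples N, G x t :=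
    Finset.sum_nbij' (i := fun t => (t.2.1, t.2.2, t.1)) (j := fun t => (t.2.2, t.1, t.2.1))
      mem_rot (fun t ht => mem_rot _ (mem_rot _ ht)) (fun t _ => rfl) (fun t _ => rfl)
      (fun t _ => rfl)
  have rot2 : ∑ t ∈ Triples N, G x (t.2.2, t.1, t.2.1) = ∑ t ∈ Triples N, G x t :=
    Finset.sum_nbij' (i := fun t => (t.2.2, t.1, t.2.1)) (j := fun t => (t.2.1, t.2.2, t.1))
      (fun t ht => mem_rot _ (mem_rot _ ht)) mem_rot (fun t _ => rfl) (fun t _ => rfl)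
      (fun t _ => rfl)
  have key0 : ∀ t ∈ Triples N,
      G x t + G x (t.2.1, t.2.2, t.1) + G x (t.2.2, t.1, t.2.1) = 0 := by
    intro t ht
    obtain ⟨h1, h2, h3⟩ := (Finset.mem_filter.mp ht).2
    exact G_cyc x h1 h2 h3
  have h3 : (3 : ℝ) * ∑ t ∈ Triples N, G x t = 0 := by
    calc (3 : ℝ) * ∑ t ∈ Triples N, G x t
        = ∑ t ∈ Triples N, G x t + ∑ t ∈ Triples N, G x (t.2.1, t.2.2, t.1)
            + ∑ t ∈ Triples N, G x (t.2.2, t.1, t.2.1) := by rw [rot1, rot2]; ring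
      _ = ∑ t ∈ Triples N,
            (G x t + G x (t.2.1, t.2.2, t.1) + G x (t.2.2, t.1, t.2.1)) := by
          rw [← Finset.sum_add_distrib, ← Finset.sum_add_distrib]
      _ = 0 := Finset.sum_eq_zero key0
  linarith

lemma c_zero (x : Fin N → ℝ) {p q : Fin N × Fin N}
    (h : ¬(p.1 = q.1 ∨ p.1 = q.2 ∨ p.2 = q.1 ∨ p.2 = q.2)) :
    ∑ a, x a * mm a p * mm a q = 0 := by
  push_neg at h
  obtain ⟨h11, h12, h21, h22⟩ := h
  refine Finset.sum_eq_zero fun a _ => ?_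
  by_cases ha1 : a = p.1
  · subst ha1; rw [mm_eq_zero h11 h12]; ring
  by_cases ha2 : a = p.2
  · subst ha2; rw [mm_eq_zero h21 h22]; ring
  · rw [mm_eq_zero ha1 ha2]; ring

lemma sumC (x : Fin N → ℝ) : ∑ i, x i * D2 x i = 0 := by
  have step1 : ∑ i, x i * D2 x i
      = ∑ p ∈ Pairs N, ∑ q ∈ (Pairs N).erase p,
          (∏ r ∈ ((Pairs N).erase p).erase q, dd x r) * ∑ a, x a * mm a p * mm a q := by
    simp only [D2, Finset.sum_mul, Finset.mul_sum]
    rw [Finset.sum_comm]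
    refine Finset.sum_congr rfl fun p hp => ?_
    rw [Finset.sum_comm]
    exact Finset.sum_congr rfl fun q hq => Finset.sum_congr rfl fun a _ => by ring
  rw [step1]
  -- flatten the double sum to a sum over a product finset
  have step2 : ∑ p ∈ Pairs N, ∑ q ∈ (Pairs N).erase p,
          (∏ r ∈ ((Pairs N).erase p).erase q, dd x r) * ∑ a, x a * mm a p * mm a q
      = ∑ z ∈ ((Pairs N) ×ˢ (Pairs N)).filter (fun z => z.2 ≠ z.1),
          (∏ r ∈ ((Pairs N).erase z.1).erase z.2, dd x r) * ∑ a, x a * mm a z.1 * mm a z.2 := by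
    calc ∑ p ∈ Pairs N, ∑ q ∈ (Pairs N).erase p,
          (∏ r ∈ ((Pairs N).erase p).erase q, dd x r) * ∑ a, x a * mm a p * mm a q
        = ∑ p ∈ Pairs N, ∑ q ∈ Pairs N, if q ≠ p then
            (∏ r ∈ ((Pairs N).erase p).erase q, dd x r) * ∑ a, x a * mm a p * mm a q else 0 :=
          Finset.sum_congr rfl fun p _ => by
            rw [← Finset.filter_ne' (Pairs N) p, Finset.sum_filter]
      _ = ∑ z ∈ (Pairs N) ×ˢ (Pairs N), if z.2 ≠ z.1 then
            (∏ r ∈ ((Pairs N).erase z.1).erase z.2, dd x r) * ∑ a, x a * mm a z.1 * mm a z.2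
              else 0 := (Finset.sum_product' _ _ _).symm
      _ = _ := (Finset.sum_filter _ _).symm
  rw [step2]
  -- drop the terms where the two pairs are disjoint
  set E := (((Pairs N) ×ˢ (Pairs N)).filter
    (fun z => z.2 ≠ z.1)).filter
      (fun z => z.1.1 = z.2.1 ∨ z.1.1 = z.2.2 ∨ z.1.2 = z.2.1 ∨ z.1.2 = z.2.2) with hE
  have step3 : ∑ z ∈ ((Pairs N) ×ˢ (Pairs N)).filter (fun z => z.2 ≠ z.1),
          (∏ r ∈ ((Pairs N).erase z.1).erase z.2, dd x r) * ∑ a, x a * mm a z.1 * mm a z.2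
      = ∑ z ∈ E,
          (∏ r ∈ ((Pairs N).erase z.1).erase z.2, dd x r) * ∑ a, x a * mm a z.1 * mm a z.2 := by
    rw [hE]
    rw [← Finset.sum_filter_add_sum_filter_not
      (((Pairs N) ×ˢ (Pairs N)).filter (fun z => z.2 ≠ z.1))
      (fun z => z.1.1 = z.2.1 ∨ z.1.1 = z.2.2 ∨ z.1.2 = z.2.1 ∨ z.1.2 = z.2.2)]
    have : ∑ z ∈ (((Pairs N) ×ˢ (Pairs N)).filter (fun z => z.2 ≠ z.1)).filter
        (fun z => ¬(z.1.1 = z.2.1 ∨ z.1.1 = z.2.2 ∨ z.1.2 = z.2.1 ∨ z.1.2 = z.2.2)),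
        (∏ r ∈ ((Pairs N).erase z.1).erase z.2, dd x r) * ∑ a, x a * mm a z.1 * mm a z.2 = 0 := by
      refine Finset.sum_eq_zero fun z hz => ?_
      rw [c_zero x (Finset.mem_filter.mp hz).2, mul_zero]
    rw [this, add_zero]
  rw [step3]
  -- reindex by ordered triples of distinct indices
  have step4 : ∑ z ∈ E,
      (∏ r ∈ ((Pairs N).erase z.1).erase z.2, dd x r) * ∑ a, x a * mm a z.1 * mm a z.2
      = ∑ t ∈ Triples N, G x t := by
    symm
    refine Finset.sum_bij (fun t _ => ((P t.1 t.2.1, P t.1 t.2.2) : (Fin N × Fin N) × (Fin N × Fin N)))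
      ?_ ?_ ?_ ?_
    · -- maps into E
      intro t ht
      obtain ⟨h1, h2, h3⟩ := (Finset.mem_filter.mp ht).2
      rw [hE]
      refine Finset.mem_filter.mpr ⟨Finset.mem_filter.mpr
        ⟨Finset.mem_product.mpr ⟨P_mem h1, P_mem h2⟩, fun hc => (P_ne_P h2 h3) hc.symm⟩, ?_⟩
      rcases P_fst_snd (a := t.1) (b := t.2.1) with ⟨u1, _⟩ | ⟨_, u2⟩ <;>
        rcases P_fst_snd (a := t.1) (b := t.2.2) with ⟨v1, _⟩ | ⟨_, v2⟩
      · exact Or.inl (u1.trans v1.symm)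
      · exact Or.inr (Or.inl (u1.trans v2.symm))
      · exact Or.inr (Or.inr (Or.inl (u2.trans v1.symm)))
      · exact Or.inr (Or.inr (Or.inr (u2.trans v2.symm)))
    · -- injective
      intro a1 h1 a2 h2 heq
      obtain ⟨d1, d2, d3⟩ := (Finset.mem_filter.mp h1).2
      obtain ⟨e1, e2, e3⟩ := (Finset.mem_filter.mp h2).2
      have q1 := P_eq_iff (congrArg Prod.fst heq)
      have q2 := P_eq_iff (congrArg Prod.snd heq)
      rcases q1 with ⟨u1, u2⟩ | ⟨u1, u2⟩ <;> rcases q2 with ⟨v1, v2⟩ | ⟨v1, v2⟩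
      · exact Prod.ext_iff.mpr ⟨u1, Prod.ext_iff.mpr ⟨u2, v2⟩⟩
      · exact absurd (u1.trans v2.symm) d2
      · exact absurd (v1.symm.trans u1) e1
      · exact absurd (u1.symm.trans v1) e3
    · -- surjective
      intro z hz
      rw [hE] at hz
      obtain ⟨hz1, hshare⟩ := Finset.mem_filter.mp hz
      obtain ⟨hzprod, hne⟩ := Finset.mem_filter.mp hz1
      obtain ⟨hp, hq⟩ := Finset.mem_product.mp hzprod
      have hplt : z.1.1 < z.1.2 := (Finset.mem_filter.mp hp).2
      have hqlt : z.2.1 < z.2.2 := (Finset.mem_filter.mp hq).2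
      rcases hshare with h | h | h | h
      · refine ⟨(z.1.1, z.1.2, z.2.2), Finset.mem_filter.mpr ⟨Finset.mem_univ _,
          p_ne hp, by rw [h]; exact p_ne hq,
          fun hc => hne (Prod.ext_iff.mpr ⟨h.symm, hc.symm⟩)⟩, ?_⟩
        refine Prod.ext_iff.mpr ⟨P_canon hp, ?_⟩
        show P z.1.1 z.2.2 = z.2
        rw [h]; exact P_canon hq
      · have hne1 : z.1.1 ≠ z.2.1 := fun hc => p_ne hq (hc.symm.trans h)
        have hne2 : z.1.2 ≠ z.2.1 := by
          intro hc
          rw [hc] at hplt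
          rw [h] at hplt
          exact (lt_asymm hplt) hqlt
        refine ⟨(z.1.1, z.1.2, z.2.1), Finset.mem_filter.mpr ⟨Finset.mem_univ _,
          p_ne hp, hne1, hne2⟩, ?_⟩
        refine Prod.ext_iff.mpr ⟨P_canon hp, ?_⟩
        show P z.1.1 z.2.1 = z.2
        rw [P_symm hne1, h]; exact P_canon hq
      · have hne1 : z.1.2 ≠ z.2.2 := fun hc => p_ne hq (h.symm.trans hc)
        have hne2 : z.1.1 ≠ z.2.2 := by
          intro hc
          rw [h] at hplt
          exact (ne_of_lt (hplt.trans hqlt)) hc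
        refine ⟨(z.1.2, z.1.1, z.2.2), Finset.mem_filter.mpr ⟨Finset.mem_univ _,
          (p_ne hp).symm, hne1, hne2⟩, ?_⟩
        refine Prod.ext_iff.mpr ⟨?_, ?_⟩
        · show P z.1.2 z.1.1 = z.1
          rw [P_symm (p_ne hp).symm]; exact P_canon hp
        · show P z.1.2 z.2.2 = z.2
          rw [h]; exact P_canon hq
      · have hne1 : z.1.2 ≠ z.2.1 := fun hc => p_ne hq (hc.symm.trans h)
        have hne2 : z.1.1 ≠ z.2.1 := fun hc => hne (Prod.ext_iff.mpr ⟨hc.symm, h.symm⟩)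
        refine ⟨(z.1.2, z.1.1, z.2.1), Finset.mem_filter.mpr ⟨Finset.mem_univ _,
          (p_ne hp).symm, hne1, hne2⟩, ?_⟩
        refine Prod.ext_iff.mpr ⟨?_, ?_⟩
        · show P z.1.2 z.1.1 = z.1
          rw [P_symm (p_ne hp).symm]; exact P_canon hp
        · show P z.1.2 z.2.1 = z.2
          rw [P_symm hne1, h]; exact P_canon hq
    · -- values agree
      intro t ht
      obtain ⟨h1, h2, h3⟩ := (Finset.mem_filter.mp ht).2
      simp only [G]
      rw [sum_xmm_P x h1 h2 h3]
      ring
  rw [step4]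
  exact sum_G x

lemma card_pairs_nat : (Pairs N).card + (Pairs N).card + N = N * N := by
  have hswap : ((Finset.univ.filter fun p : Fin N × Fin N => p.2 < p.1)).card
      = (Pairs N).card := by
    refine Finset.card_bij (fun p _ => p.swap) ?_ ?_ ?_
    · intro p hp
      simp only [Pairs, Finset.mem_filter, Finset.mem_univ, true_and] at hp ⊢
      exact hp
    · intro a _ b _ hab
      exact Prod.swap_injective hab
    · intro b hb
      refine ⟨b.swap, ?_, Prod.swap_swap b⟩
      simp only [Pairs, Finset.mem_filter, Finset.mem_univ, true_and] at hb ⊢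
      exact hb
  have hdiag : ((Finset.univ.filter fun p : Fin N × Fin N => p.1 = p.2)).card = N := by
    refine Eq.trans (Finset.card_bij (t := (Finset.univ : Finset (Fin N)))
      (fun p _ => p.1) ?_ ?_ ?_) ?_
    · intro p _; exact Finset.mem_univ _
    · intro a ha b hb hab
      have hab' : a.1 = b.1 := hab
      have ha' := (Finset.mem_filter.mp ha).2
      have hb' := (Finset.mem_filter.mp hb).2
      exact Prod.ext_iff.mpr ⟨hab', by rw [← ha', ← hb', hab']⟩
    · intro b _
      exact ⟨(b, b), Finset.mem_filter.mpr ⟨Finset.mem_univ _, rfl⟩, rfl⟩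
    · simp
  have c1 := Finset.card_filter_add_card_filter_not
    (s := (Finset.univ : Finset (Fin N × Fin N))) (p := fun p => p.1 < p.2)
  have c2 := Finset.card_filter_add_card_filter_not
    (s := Finset.univ.filter fun p : Fin N × Fin N => ¬ p.1 < p.2) (p := fun p => p.2 < p.1)
  have hsets1 : ((Finset.univ.filter fun p : Fin N × Fin N => ¬ p.1 < p.2).filter
      fun p => p.2 < p.1) = Finset.univ.filter fun p : Fin N × Fin N => p.2 < p.1 := by
    ext p
    simp only [Finset.mem_filter, Finset.mem_univ, true_and]
    exact ⟨fun h => h.2, fun h => ⟨lt_asymm h, h⟩⟩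
  have hsets2 : ((Finset.univ.filter fun p : Fin N × Fin N => ¬ p.1 < p.2).filter
      fun p => ¬ p.2 < p.1) = Finset.univ.filter fun p : Fin N × Fin N => p.1 = p.2 := by
    ext p
    simp only [Finset.mem_filter, Finset.mem_univ, true_and]
    constructor
    · rintro ⟨h1, h2⟩; exact le_antisymm (not_lt.mp h2) (not_lt.mp h1)
    · intro h; rw [h]; exact ⟨lt_irrefl _, lt_irrefl _⟩
  rw [hsets1, hsets2, hswap, hdiag] at c2
  have hcard : (Finset.univ : Finset (Fin N × Fin N)).card = N * N := by
    simp
  rw [hcard] at c1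
  have : (Pairs N).card = ((Finset.univ : Finset (Fin N × Fin N)).filter
      fun p => p.1 < p.2).card := rfl
  omega

lemma card_pairs_real : (((Pairs N).card : ℝ)) = (N : ℝ) * ((N : ℝ) - 1) / 2 := by
  have h := card_pairs_nat (N := N)
  have h' : ((Pairs N).card : ℝ) + ((Pairs N).card : ℝ) + (N : ℝ) = (N : ℝ) * (N : ℝ) := by
    exact_mod_cast congrArg (Nat.cast : ℕ → ℝ) h
  linarith [h']
end Stmt7

/-- The Vandermonde determinant is an eigenfunction of
`∑ᵢ L_{α,xᵢ}`, where `L_{α,x} = x ∂²/∂x² + (-x+1+α) ∂/∂x`, with eigenvalue `-N(N-1)/2`. -/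
theorem stmt7 {N : ℕ} (hN : 1 ≤ N) (α : ℝ) (x : Fin N → ℝ) :
    (∑ i : Fin N,
        (x i * deriv (deriv fun t => vdm (Function.update x i t)) (x i) +
          (-(x i) + 1 + α) * deriv (fun t => vdm (Function.update x i t)) (x i))) =
      -((N : ℝ) * ((N : ℝ) - 1) / 2) * vdm x := by
  have hrw : ∀ i : Fin N,
      x i * deriv (deriv fun t => vdm (Function.update x i t)) (x i) +
        (-(x i) + 1 + α) * deriv (fun t => vdm (Function.update x i t)) (x i)
      = x i * Stmt7.D2 x i + ((1 + α) * Stmt7.D1 x i - x i * Stmt7.D1 x i) := by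
    intro i
    rw [Stmt7.deriv_deriv_vdm_update, Stmt7.deriv_vdm_update_eval]
    ring
  rw [Finset.sum_congr rfl fun i _ => hrw i]
  rw [Finset.sum_add_distrib, Finset.sum_sub_distrib, ← Finset.mul_sum,
    Stmt7.sumC x, Stmt7.sumA x, Stmt7.sumB x, Stmt7.card_pairs_real]
  ring


end
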